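/- arXiv:0909.3085 — 4 statements merged into one kernel-verified Lean document; each statement's English description precedes it below -/
import Mathlib

section
/- Let a > 0, let f(x) = x·ln(1/x) with inverse f⁻¹ : (0, e⁻¹) → (0, e⁻¹), and g(z) = z/f⁻¹(z). Let λ : I → (0,∞) be twice continuously differentiable on an interval I with λ̇(t)²/a ∈ (0, e⁻¹) for all t ∈ I, and suppose λ(t)·λ̈(t) = a·f⁻¹(λ̇(t)²/a) on I. Then the function t ↦ ln(λ(t)) + (1/4)·(g(λ̇(t)²/a) − 1)² is constant on I. -/
open Filter Topology


/-- First integral of the exact scaling law: if `λλ̈ = a f⁻¹(λ̇²/a)` on an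
interval `I` then `t ↦ ln λ + (1/4)(g(λ̇²/a) − 1)²` is constant on `I`, where
`f(x) = x ln(1/x)` and `g(z) = z/f⁻¹(z)`. -/
theorem stmt_14 (a : ℝ) (ha : 0 < a) (f finv : ℝ → ℝ)
    (hf : f = fun x => x * Real.log (1/x))
    (hinv : ∀ z ∈ Set.Ioo (0:ℝ) (Real.exp (-1)),
      finv z ∈ Set.Ioo (0:ℝ) (Real.exp (-1)) ∧ f (finv z) = z)
    (g : ℝ → ℝ) (hg : g = fun z => z / finv z)
    (I : Set ℝ) (hIopen : IsOpen I) (hIconn : I.OrdConnected)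
    (lam : ℝ → ℝ) (hlam : ContDiffOn ℝ 2 lam I) (hpos : ∀ t ∈ I, 0 < lam t)
    (hrange : ∀ t ∈ I, (deriv lam t)^2 / a ∈ Set.Ioo (0:ℝ) (Real.exp (-1)))
    (hode : ∀ t ∈ I,
      lam t * deriv (deriv lam) t = a * finv ((deriv lam t)^2 / a)) :
    ∃ C : ℝ, ∀ t ∈ I,
      Real.log (lam t) + (1/4) * (g ((deriv lam t)^2 / a) - 1)^2 = C := by
  have hflog : f = fun x => -(x * Real.log x) := by
    rw [hf]; funext x; rw [one_div, Real.log_inv]; ring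
  have hfc : Continuous f := by rw [hflog]; exact Real.continuous_mul_log.neg
  have hfd : ∀ x : ℝ, x ≠ 0 → HasStrictDerivAt f (-(Real.log x + 1)) x := by
    intro x hx
    rw [hflog]
    have h := ((hasStrictDerivAt_id x).mul (Real.hasStrictDerivAt_log hx)).neg
    convert h using 1
    · rfl
    · rfl
    · rfl
    simp [hx]
  have hmono : StrictMonoOn f (Set.Icc 0 (Real.exp (-1))) := by
    apply strictMonoOn_of_deriv_pos (convex_Icc _ _) hfc.continuousOn
    intro x hx
    rw [interior_Icc] at hx
    rw [(hfd x (ne_of_gt hx.1)).hasDerivAt.deriv]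
    have hlt : Real.log x < -1 := by
      have := Real.log_lt_log hx.1 hx.2
      rwa [Real.log_exp] at this
    linarith
  have hmaps : ∀ x ∈ Set.Ioo (0:ℝ) (Real.exp (-1)),
      f x ∈ Set.Ioo (0:ℝ) (Real.exp (-1)) := by
    intro x hx
    have h0 : f 0 = 0 := by rw [hflog]; simp
    have he : f (Real.exp (-1)) = Real.exp (-1) := by
      rw [hflog]; simp [Real.log_exp]
    have hm0 : (0:ℝ) ∈ Set.Icc (0:ℝ) (Real.exp (-1)) := ⟨le_rfl, (Real.exp_pos _).le⟩
    have hme : (Real.exp (-1)) ∈ Set.Icc (0:ℝ) (Real.exp (-1)) := ⟨(Real.exp_pos _).le, le_rfl⟩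
    have hmx : x ∈ Set.Icc (0:ℝ) (Real.exp (-1)) := ⟨hx.1.le, hx.2.le⟩
    constructor
    · have := hmono hm0 hmx hx.1; rwa [h0] at this
    · have := hmono hmx hme hx.2; rwa [he] at this
  have hinj : Set.InjOn f (Set.Ioo (0:ℝ) (Real.exp (-1))) :=
    hmono.injOn.mono Set.Ioo_subset_Icc_self
  have hfinv_deriv : ∀ z ∈ Set.Ioo (0:ℝ) (Real.exp (-1)),
      HasStrictDerivAt finv (-(Real.log (finv z) + 1))⁻¹ z := by
    intro z hz
    obtain ⟨hx₀mem, hx₀eq⟩ := hinv z hz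
    have hx0 : finv z ≠ 0 := ne_of_gt hx₀mem.1
    have hlog : Real.log (finv z) < -1 := by
      have := Real.log_lt_log hx₀mem.1 hx₀mem.2
      rwa [Real.log_exp] at this
    have hne : (-(Real.log (finv z) + 1)) ≠ 0 := by linarith
    have hev : ∀ᶠ x in 𝓝 (finv z), finv (f x) = x := by
      filter_upwards [isOpen_Ioo.mem_nhds hx₀mem] with x hx
      have h1 := hmaps x hx
      obtain ⟨h2, h3⟩ := hinv (f x) h1
      exact hinj h2 hx h3
    have hres := (hfd _ hx0).to_local_left_inverse hne hev
    rwa [hx₀eq] at hres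
  rcases Set.eq_empty_or_nonempty I with hI | ⟨t₀, ht₀⟩
  · exact ⟨0, by simp [hI]⟩
  set F : ℝ → ℝ := fun t => Real.log (lam t) + (1/4) * (g ((deriv lam t)^2 / a) - 1)^2
    with hFdef
  have key : ∀ t ∈ I, HasDerivAt F 0 t := by
    intro t ht
    have hz := hrange t ht
    obtain ⟨hx₀mem, hx₀eq⟩ := hinv _ hz
    set L := lam t
    set L' := deriv lam t with hL'def
    set L'' := deriv (deriv lam) t with hL''def
    set zt := L'^2 / a with hztdef
    set x₀ := finv zt with hx₀def
    have hLpos : 0 < L := hpos t ht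
    have hx₀pos : 0 < x₀ := hx₀mem.1
    have hlogx : Real.log x₀ < -1 := by
      have := Real.log_lt_log hx₀pos hx₀mem.2
      rwa [Real.log_exp] at this
    have hode' : L * L'' = a * x₀ := hode t ht
    have hfx : -(x₀ * Real.log x₀) = zt := by
      have := hx₀eq; rw [hflog] at this; exact this
    -- differentiability of lam and deriv lam
    have hdL : HasDerivAt lam L' t := by
      have h1 : DifferentiableOn ℝ lam I := hlam.differentiableOn (by norm_num)
      exact ((h1 t ht).differentiableAt (hIopen.mem_nhds ht)).hasDerivAt
    have hdL' : HasDerivAt (deriv lam) L'' t := by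
      have h1 : ContDiffOn ℝ 1 (deriv lam) I :=
        hlam.deriv_of_isOpen hIopen (by norm_num)
      have h2 : DifferentiableOn ℝ (deriv lam) I := h1.differentiableOn (by norm_num)
      exact ((h2 t ht).differentiableAt (hIopen.mem_nhds ht)).hasDerivAt
    have hdz : HasDerivAt (fun s => (deriv lam s)^2 / a) (2 * L' * L'' / a) t := by
      have := (hdL'.pow 2).div_const a
      convert this using 1
      · rfl
      · rfl
      · rfl
      push_cast
      simp only [hL'def]
      ring
    set d := (-(Real.log x₀ + 1))⁻¹ with hddef
    have hdfinv : HasDerivAt finv d zt := (hfinv_deriv zt hz).hasDerivAt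
    have hdg : HasDerivAt g ((1 * x₀ - zt * d) / x₀^2) zt := by
      rw [hg]
      exact (hasDerivAt_id zt).div hdfinv (ne_of_gt hx₀pos)
    have hcomp : HasDerivAt (fun s => g ((deriv lam s)^2 / a))
        ((1 * x₀ - zt * d) / x₀^2 * (2 * L' * L'' / a)) t := hdg.comp t hdz
    have hsq : HasDerivAt (fun s => (g ((deriv lam s)^2 / a) - 1)^2)
        (2 * (g zt - 1)^1 * ((1 * x₀ - zt * d) / x₀^2 * (2 * L' * L'' / a))) t :=
      (hcomp.sub_const 1).pow 2
    have hlogL : HasDerivAt (fun s => Real.log (lam s)) (L' / L) t :=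
      hdL.log (ne_of_gt hLpos)
    have htotal := hlogL.add (hsq.const_mul ((1:ℝ)/4))
    have hval : L' / L + 1/4 * (2 * (g zt - 1)^1 *
        ((1 * x₀ - zt * d) / x₀^2 * (2 * L' * L'' / a))) = 0 := by
      have hgz : g zt = zt / x₀ := by rw [hg]
      have hu : Real.log x₀ + 1 ≠ 0 := by linarith
      have hane : a ≠ 0 := ne_of_gt ha
      have hx₀ne : x₀ ≠ 0 := ne_of_gt hx₀pos
      have hLne : L ≠ 0 := ne_of_gt hLpos
      have hune : -(Real.log x₀ + 1) ≠ 0 := by linarith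
      have h1 : zt = -(x₀ * Real.log x₀) := hfx.symm
      have hA : (zt / x₀ - 1) * (1 * x₀ - zt * d) = -x₀ := by
        have h2 : -1 - Real.log x₀ ≠ 0 := by linarith
        rw [h1, hddef]
        have h4 : (-1 - Real.log x₀)⁻¹ * (-1 - Real.log x₀) = 1 := inv_mul_cancel₀ h2
        field_simp
        linear_combination 0 * h4
      have hstep : L' / L + 1/4 * (2 * (g zt - 1)^1 *
          ((1 * x₀ - zt * d) / x₀^2 * (2 * L' * L'' / a)))
          = L' / L + ((g zt - 1) * (1 * x₀ - zt * d)) * (L' * L'') / (x₀^2 * a) := by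
        ring
      rw [hstep, hgz, hA]
      field_simp
      linear_combination (-L') * hode'
    rw [hFdef]
    have := htotal
    rw [hval] at this
    exact this
  have hconv : Convex ℝ I := convex_iff_ordConnected.mpr hIconn
  refine ⟨F t₀, fun t ht => ?_⟩
  have hdiff : DifferentiableOn ℝ F I := fun s hs =>
    (key s hs).differentiableAt.differentiableWithinAt
  have hzero : ∀ s ∈ I, fderivWithin ℝ F I s = 0 := by
    intro s hs
    rw [fderivWithin_of_isOpen hIopen hs]
    have h1 : HasFDerivAt F ((1 : ℝ →L[ℝ] ℝ).smulRight 0) s := key s hs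
    rw [h1.fderiv]
    ext
    simp [ContinuousLinearMap.smulRight_apply]
  exact hconv.is_const_of_fderivWithin_eq_zero hdiff hzero ht ht₀
end

section
/- Let a > 0, c > 0, t* ∈ ℝ, and let λ : I → (0,∞) be differentiable on an interval I ⊂ (−∞, t*) with 0 < λ(t) < c for all t ∈ I, and suppose √a·(t* − t) = ∫_0^{λ(t)} e^{√(ln(c/x))} dx for all t ∈ I. Then λ is twice differentiable on I, λ̇(t) < 0, 0 < λ̇(t)² < a, and λ(t)·λ̈(t)·ln(a/λ̇(t)²) = λ̇(t)² for all t ∈ I. -/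
open MeasureTheory intervalIntegral Real Set Filter


/-- If `√a (t* − t) = ∫_0^{λ(t)} e^{√(ln(c/x))} dx` on an interval
`I ⊆ (−∞, t*)` with `0 < λ < c`, then `λ` is twice differentiable on `I`,
`λ̇ < 0`, `0 < λ̇² < a` and `λλ̈ ln(a/λ̇²) = λ̇²` on `I`. -/
theorem stmt_16 (a c tstar : ℝ) (ha : 0 < a) (hc : 0 < c)
    (I : Set ℝ) (hIopen : IsOpen I) (hIconn : I.OrdConnected)
    (hIsub : I ⊆ Set.Iio tstar)
    (lam : ℝ → ℝ) (hdiff : ∀ t ∈ I, DifferentiableAt ℝ lam t)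
    (hrange : ∀ t ∈ I, 0 < lam t ∧ lam t < c)
    (hquad : ∀ t ∈ I, Real.sqrt a * (tstar - t)
      = ∫ x in Set.Ioc (0:ℝ) (lam t), Real.exp (Real.sqrt (Real.log (c/x)))) :
    ∀ t ∈ I, DifferentiableAt ℝ (deriv lam) t ∧
      deriv lam t < 0 ∧ 0 < (deriv lam t)^2 ∧ (deriv lam t)^2 < a ∧
      lam t * deriv (deriv lam) t * Real.log (a / (deriv lam t)^2)
        = (deriv lam t)^2 := by
  set f : ℝ → ℝ := fun x => Real.exp (Real.sqrt (Real.log (c/x))) with hfdef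
  have hmeasf : Measurable f := by
    apply Real.measurable_exp.comp
    exact Real.continuous_sqrt.measurable.comp (Real.measurable_log.comp (measurable_const.div measurable_id))
  -- integrability on [0,y] for y ∈ [0,c]
  have hint : ∀ y : ℝ, 0 ≤ y → y ≤ c → IntervalIntegrable f volume 0 y := by
    intro y hy0 hyc
    rw [intervalIntegrable_iff_integrableOn_Ioc_of_le hy0]
    have hg : IntegrableOn (fun x : ℝ => Real.exp (1/2) * Real.sqrt c * x ^ (-(1/2) : ℝ)) (Set.Ioc 0 y) volume := by
      have := (intervalIntegral.intervalIntegrable_rpow' (a := 0) (b := y) (r := -(1/2)) (by norm_num))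
      rw [intervalIntegrable_iff_integrableOn_Ioc_of_le hy0] at this
      exact this.const_mul _
    refine hg.integrable.mono (hmeasf.aestronglyMeasurable.restrict) ?_
    filter_upwards [ae_restrict_mem measurableSet_Ioc] with x hx
    obtain ⟨hx0, hxy⟩ := hx
    have hxc : x ≤ c := hxy.trans hyc
    have hcx1 : (1:ℝ) ≤ c / x := (one_le_div hx0).2 hxc
    have hL0 : 0 ≤ Real.log (c / x) := Real.log_nonneg hcx1
    have key : Real.sqrt (Real.log (c/x)) ≤ (Real.log (c/x) + 1) / 2 := by
      nlinarith [Real.sq_sqrt hL0, Real.sqrt_nonneg (Real.log (c/x)), sq_nonneg (Real.sqrt (Real.log (c/x)) - 1)]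
    have h1 : f x ≤ Real.exp ((Real.log (c/x) + 1)/2) := Real.exp_le_exp.2 key
    have h2 : Real.exp ((Real.log (c/x) + 1)/2) = Real.exp (1/2) * Real.sqrt c * x ^ (-(1/2) : ℝ) := by
      have hdx : (0:ℝ) < c / x := div_pos hc hx0
      rw [show (Real.log (c/x) + 1)/2 = Real.log (c/x) * (1/2) + 1/2 by ring,
        Real.exp_add, Real.exp_mul, Real.exp_log hdx]
      rw [Real.div_rpow hc.le hx0.le, Real.rpow_neg hx0.le]
      rw [Real.sqrt_eq_rpow, div_eq_mul_inv]
      ring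
    rw [Real.norm_eq_abs, Real.norm_eq_abs, abs_of_pos (Real.exp_pos _),
      abs_of_pos (by positivity : (0:ℝ) < Real.exp (1/2) * Real.sqrt c * x ^ (-(1/2) : ℝ))]
    exact h1.trans_eq h2
  -- g is the explicit formula for the derivative
  set g : ℝ → ℝ := fun y => -(Real.sqrt a * Real.exp (-(Real.sqrt (Real.log (c/y))))) with hgdef
  -- first derivative identity on I
  have hderiv : ∀ t ∈ I, deriv lam t = g (lam t) := by
    intro t ht
    obtain ⟨hl0, hlc⟩ := hrange t ht
    have hlam := (hdiff t ht).hasDerivAt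
    have hF : HasDerivAt (fun u => ∫ x in (0:ℝ)..u, f x) (f (lam t)) (lam t) :=
      intervalIntegral.integral_hasDerivAt_right (hint _ hl0.le hlc.le)
        (hmeasf.stronglyMeasurable.stronglyMeasurableAtFilter)
        (by
          have h1 : ContinuousAt (fun x : ℝ => c / x) (lam t) :=
            continuousAt_const.div continuousAt_id hl0.ne'
          have h2 : ContinuousAt Real.log (c / lam t) :=
            Real.continuousAt_log (by positivity)
          exact Real.continuous_exp.continuousAt.comp
            (Real.continuous_sqrt.continuousAt.comp (h2.comp h1)))
    have hcomp : HasDerivAt (fun u => ∫ x in (0:ℝ)..(lam u), f x)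
        (f (lam t) * deriv lam t) t := by
      have := hF.comp t hlam
      simpa [mul_comm, Function.comp_def] using this
    have hEq : (fun u => Real.sqrt a * (tstar - u)) =ᶠ[nhds t]
        (fun u => ∫ x in (0:ℝ)..(lam u), f x) := by
      filter_upwards [hIopen.mem_nhds ht] with u hu
      rw [hquad u hu, intervalIntegral.integral_of_le (hrange u hu).1.le]
    have hlin : HasDerivAt (fun u => Real.sqrt a * (tstar - u)) (-Real.sqrt a) t := by
      have : HasDerivAt (fun u : ℝ => Real.sqrt a * (tstar - u))
          (Real.sqrt a * (0 - 1)) t :=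
        ((hasDerivAt_const t tstar).sub (hasDerivAt_id t)).const_mul (Real.sqrt a)
      simpa using this
    have huniq : f (lam t) * deriv lam t = -Real.sqrt a :=
      (hcomp.congr_of_eventuallyEq hEq).unique hlin
    have hfpos : 0 < f (lam t) := Real.exp_pos _
    have : deriv lam t = -Real.sqrt a / f (lam t) := by
      field_simp at huniq ⊢
      linarith [huniq]
    rw [this, hgdef, hfdef]
    simp only [Real.exp_neg]
    field_simp
  -- derivative of g at points of (0,c)
  have hgderiv : ∀ y : ℝ, 0 < y → y < c →
      HasDerivAt g (-(Real.sqrt a * (Real.exp (-(Real.sqrt (Real.log (c/y)))) *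
        (y⁻¹ / (2 * Real.sqrt (Real.log (c/y))))))) y := by
    intro y hy0 hyc
    have hLpos : 0 < Real.log (c / y) := Real.log_pos ((one_lt_div hy0).2 hyc)
    have hL : HasDerivAt (fun z : ℝ => Real.log (c / z)) (-y⁻¹) y := by
      have h1 : HasDerivAt (fun z : ℝ => Real.log c - Real.log z) (0 - y⁻¹) y :=
        (hasDerivAt_const y (Real.log c)).sub (Real.hasDerivAt_log hy0.ne')
      refine HasDerivAt.congr_of_eventuallyEq (by simpa using h1) ?_
      filter_upwards [eventually_gt_nhds hy0] with z hz
      rw [Real.log_div hc.ne' hz.ne']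
    have hS : HasDerivAt (fun z : ℝ => Real.sqrt (Real.log (c / z)))
        (1 / (2 * Real.sqrt (Real.log (c / y))) * -y⁻¹) y :=
      (Real.hasDerivAt_sqrt hLpos.ne').comp y hL
    have hE : HasDerivAt (fun z : ℝ => Real.exp (-(Real.sqrt (Real.log (c / z)))))
        (Real.exp (-(Real.sqrt (Real.log (c / y)))) *
          -(1 / (2 * Real.sqrt (Real.log (c / y))) * -y⁻¹)) y :=
      (Real.hasDerivAt_exp _).comp y hS.neg
    have : HasDerivAt g _ y := (hE.const_mul (Real.sqrt a)).neg
    convert this using 1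
    ring
  intro t ht
  obtain ⟨hl0, hlc⟩ := hrange t ht
  have hlam := (hdiff t ht).hasDerivAt
  have hLpos : 0 < Real.log (c / lam t) := Real.log_pos ((one_lt_div hl0).2 hlc)
  set s : ℝ := Real.sqrt (Real.log (c / lam t)) with hsdef
  have hspos : 0 < s := Real.sqrt_pos.2 hLpos
  have hEq2 : deriv lam =ᶠ[nhds t] (g ∘ lam) := by
    filter_upwards [hIopen.mem_nhds ht] with u hu
    exact hderiv u hu
  have hg2 : HasDerivAt (g ∘ lam)
      (-(Real.sqrt a * (Real.exp (-s) * ((lam t)⁻¹ / (2 * s)))) * deriv lam t) t :=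
    (hgderiv (lam t) hl0 hlc).comp t hlam
  have hd2 : HasDerivAt (deriv lam)
      (-(Real.sqrt a * (Real.exp (-s) * ((lam t)⁻¹ / (2 * s)))) * deriv lam t) t :=
    hg2.congr_of_eventuallyEq hEq2
  have hd : deriv lam t = -(Real.sqrt a * Real.exp (-s)) := hderiv t ht
  have hsa : 0 < Real.sqrt a := Real.sqrt_pos.2 ha
  have hsq : Real.sqrt a ^ 2 = a := Real.sq_sqrt ha.le
  have hdneg : deriv lam t < 0 := by
    have h0 : 0 < Real.sqrt a * Real.exp (-s) := by positivity
    rw [hd]; linarith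
  have hdsq : (deriv lam t)^2 = a * Real.exp (-s)^2 := by
    rw [hd, show (-(Real.sqrt a * Real.exp (-s)))^2
      = Real.sqrt a^2 * Real.exp (-s)^2 by ring, hsq]
  have hdsqpos : 0 < (deriv lam t)^2 := by rw [hdsq]; positivity
  have hexplt : Real.exp (-s) < 1 := by
    rw [Real.exp_lt_one_iff]; linarith
  have hdsqlt : (deriv lam t)^2 < a := by
    rw [hdsq]
    have h1 : Real.exp (-s)^2 < 1 := by nlinarith [Real.exp_pos (-s)]
    nlinarith
  have hdsq' : (deriv lam t)^2 = a * Real.exp (-(2*s)) := by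
    rw [hd, show -(2*s) = -s + -s by ring, Real.exp_add,
      show (-(Real.sqrt a * Real.exp (-s)))^2
        = Real.sqrt a^2 * (Real.exp (-s) * Real.exp (-s)) by ring, hsq]
  have hlog : Real.log (a / (deriv lam t)^2) = 2 * s := by
    rw [hdsq', show a / (a * Real.exp (-(2*s))) = Real.exp (2*s) by
      rw [Real.exp_neg]; field_simp, Real.log_exp]
  refine ⟨hd2.differentiableAt, hdneg, hdsqpos, hdsqlt, ?_⟩
  rw [hd2.deriv, hlog, hd]
  field_simp
end

section
/- Let a > 0, c > 0, let f(x) = x·ln(1/x) with inverse f⁻¹ : (0, e⁻¹) → (0, e⁻¹) and g(z) = z/f⁻¹(z). Let λ : I → (0,∞) be twice continuously differentiable on an interval I with 0 < λ(t) < c, λ̇(t) < 0 and λ̇(t)²/a ∈ (0, e⁻¹) for all t ∈ I, and suppose g(λ̇(t)²/a) = 1 + 2·√(ln(c/λ(t))) for all t ∈ I. Then λ(t)·λ̈(t) = a·f⁻¹(λ̇(t)²/a) on I. -/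
/-- Differentiating the first integral `g(λ̇²/a) = 1 + 2√(ln(c/λ))` recovers
the exact scaling equation `λλ̈ = a f⁻¹(λ̇²/a)`, where `f(x) = x ln(1/x)` and
`g(z) = z/f⁻¹(z)`. -/
theorem stmt_17 (a c : ℝ) (ha : 0 < a) (hc : 0 < c) (f finv : ℝ → ℝ)
    (hf : f = fun x => x * Real.log (1/x))
    (hinv : ∀ z ∈ Set.Ioo (0:ℝ) (Real.exp (-1)),
      finv z ∈ Set.Ioo (0:ℝ) (Real.exp (-1)) ∧ f (finv z) = z)
    (g : ℝ → ℝ) (hg : g = fun z => z / finv z)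
    (I : Set ℝ) (hIopen : IsOpen I) (hIconn : I.OrdConnected)
    (lam : ℝ → ℝ) (hlam : ContDiffOn ℝ 2 lam I)
    (hrange : ∀ t ∈ I, 0 < lam t ∧ lam t < c)
    (hneg : ∀ t ∈ I, deriv lam t < 0)
    (hz : ∀ t ∈ I, (deriv lam t)^2 / a ∈ Set.Ioo (0:ℝ) (Real.exp (-1)))
    (hfi : ∀ t ∈ I, g ((deriv lam t)^2 / a)
      = 1 + 2 * Real.sqrt (Real.log (c / lam t))) :
    ∀ t ∈ I, lam t * deriv (deriv lam) t = a * finv ((deriv lam t)^2 / a) := by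
  -- pointwise algebraic consequences of the first integral
  have key : ∀ s ∈ I,
      finv ((deriv lam s)^2 / a)
        = Real.exp (-(1 + 2 * Real.sqrt (Real.log (c / lam s)))) ∧
      (deriv lam s)^2
        = a * ((1 + 2 * Real.sqrt (Real.log (c / lam s)))
            * Real.exp (-(1 + 2 * Real.sqrt (Real.log (c / lam s))))) := by
    intro s hs
    obtain ⟨hw, hfw⟩ := hinv _ (hz s hs)
    have hgs := hfi s hs
    rw [hg] at hgs
    simp only at hgs
    rw [hf] at hfw
    simp only at hfw
    have hw0 : 0 < finv ((deriv lam s)^2 / a) := hw.1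
    have hz0 : 0 < (deriv lam s)^2 / a := (hz s hs).1
    have hlog : Real.log (1 / finv ((deriv lam s)^2 / a))
        = 1 + 2 * Real.sqrt (Real.log (c / lam s)) := by
      rw [← hgs]
      rw [eq_div_iff hw0.ne']
      linarith [hfw]
    have hwexp : finv ((deriv lam s)^2 / a)
        = Real.exp (-(1 + 2 * Real.sqrt (Real.log (c / lam s)))) := by
      rw [one_div, Real.log_inv] at hlog
      rw [← Real.exp_log hw0]
      congr 1
      linarith [hlog]
    refine ⟨hwexp, ?_⟩
    have h2 : (deriv lam s)^2 / a
        = Real.exp (-(1 + 2 * Real.sqrt (Real.log (c / lam s))))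
          * (1 + 2 * Real.sqrt (Real.log (c / lam s))) := by
      rw [← hfw, hlog, hwexp]
    rw [div_eq_iff ha.ne'] at h2
    rw [h2]; ring
  intro t ht
  have hmem : I ∈ nhds t := hIopen.mem_nhds ht
  have hp : 0 < lam t := (hrange t ht).1
  have hpc : lam t < c := (hrange t ht).2
  have hq : deriv lam t < 0 := hneg t ht
  have hL : 0 < Real.log (c / lam t) :=
    Real.log_pos (by rw [lt_div_iff₀ hp]; linarith)
  have hs0 : 0 < Real.sqrt (Real.log (c / lam t)) := Real.sqrt_pos.mpr hL
  -- differentiability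
  have hlamd : DifferentiableAt ℝ lam t :=
    ((hlam.contDiffAt hmem).differentiableAt (by norm_num))
  have hdd : DifferentiableAt ℝ (deriv lam) t := by
    have h1 : ContDiffOn ℝ 1 (deriv lam) I :=
      hlam.deriv_of_isOpen hIopen (by norm_num)
    exact (h1.contDiffAt hmem).differentiableAt (by norm_num)
  -- derivative of log (c / lam)
  have hlogD : HasDerivAt (fun s => Real.log (c / lam s))
      (-(deriv lam t / lam t)) t := by
    have h1 : HasDerivAt (fun s => c / lam s)
        ((0 * lam t - c * deriv lam t) / lam t ^ 2) t :=
      (hasDerivAt_const t c).div hlamd.hasDerivAt hp.ne'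
    have h2 := h1.log (by positivity : c / lam t ≠ 0)
    convert h2 using 1
    field_simp
    ring
  -- derivative of sqrt (log (c / lam))
  have hsqD : HasDerivAt (fun s => Real.sqrt (Real.log (c / lam s)))
      (1 / (2 * Real.sqrt (Real.log (c / lam t))) * -(deriv lam t / lam t)) t :=
    (Real.hasDerivAt_sqrt hL.ne').comp t hlogD
  -- derivative of S = 1 + 2 √(log (c/lam))
  set S' : ℝ := 2 * (1 / (2 * Real.sqrt (Real.log (c / lam t))) * -(deriv lam t / lam t))
    with hS'def
  have hSD : HasDerivAt (fun s => 1 + 2 * Real.sqrt (Real.log (c / lam s))) S' t :=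
    (hsqD.const_mul 2).const_add 1
  have hED : HasDerivAt
      (fun s => Real.exp (-(1 + 2 * Real.sqrt (Real.log (c / lam s)))))
      (Real.exp (-(1 + 2 * Real.sqrt (Real.log (c / lam t)))) * -S') t :=
    hSD.neg.exp
  have hprod := hSD.mul hED
  have hpow : HasDerivAt (fun s => (deriv lam s)^2)
      (2 * deriv lam t ^ 1 * deriv (deriv lam) t) t := by
    simpa using hdd.hasDerivAt.fun_pow 2
  have hfull := hpow.sub (hprod.const_mul a)
  have hev : (fun s => (deriv lam s)^2
      - a * ((1 + 2 * Real.sqrt (Real.log (c / lam s)))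
          * Real.exp (-(1 + 2 * Real.sqrt (Real.log (c / lam s))))))
      =ᶠ[nhds t] (fun _ => (0:ℝ)) :=
    Filter.eventuallyEq_of_mem hmem (fun s hs => sub_eq_zero.mpr (key s hs).2)
  have hD0 := (hfull.congr_of_eventuallyEq hev.symm).unique (hasDerivAt_const t 0)
  -- now algebra
  rw [(key t ht).1]
  set s := Real.sqrt (Real.log (c / lam t)) with hsdef
  set E := Real.exp (-(1 + 2 * s)) with hEdef
  have hE0 : 0 < E := Real.exp_pos _
  have hS'val : S' = -(deriv lam t) / (lam t * s) := by
    rw [hS'def]; field_simp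
  rw [hS'val] at hD0
  field_simp at hD0
  have hls : 0 < lam t * s := mul_pos hp hs0
  have hqs : 2 * deriv lam t * s < 0 := by nlinarith
  have h3 : lam t * deriv (deriv lam) t - a * E = 0 := by
    have h4 : (lam t * s) * ((2 * deriv lam t * s)
        * (lam t * deriv (deriv lam) t - a * E)) = 0 := by
      linear_combination (lam t * s) * hD0
    rcases mul_eq_zero.mp h4 with h | h
    · exact absurd h hls.ne'
    rcases mul_eq_zero.mp h with h | h
    · exact absurd h hqs.ne
    · exact h
  linarith [h3]
end

section
/- Let a > 0, let f(x) = x·ln(1/x) with inverse f⁻¹ : (0, e⁻¹) → (0, e⁻¹), let J ⊂ ℝ be an open interval with x²/a ∈ (0, e⁻¹) for all x ∈ J, and let h : J → ℝ be twice continuously differentiable with h''(x) = −1/f⁻¹(x²/a) on J. If λ : I → (0,∞) is twice continuously differentiable with λ̇(t) ∈ J for all t ∈ I and λ(t)·λ̈(t) = a·f⁻¹(λ̇(t)²/a) on I, then the energy t ↦ −λ̇(t)·h'(λ̇(t)) + h(λ̇(t)) − a·ln(λ(t)) is constant on I. -/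
/-- Hamiltonian structure: along solutions of `λλ̈ = a f⁻¹(λ̇²/a)` the energy
`E = −λ̇ h'(λ̇) + h(λ̇) − a ln λ` is conserved, where `h'' (x) = −1/f⁻¹(x²/a)`
and `f(x) = x ln(1/x)`. -/
theorem stmt_18 (a : ℝ) (ha : 0 < a) (f finv : ℝ → ℝ)
    (hf : f = fun x => x * Real.log (1/x))
    (hinv : ∀ z ∈ Set.Ioo (0:ℝ) (Real.exp (-1)),
      finv z ∈ Set.Ioo (0:ℝ) (Real.exp (-1)) ∧ f (finv z) = z)
    (J : Set ℝ) (hJopen : IsOpen J) (hJconn : J.OrdConnected)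
    (hJ : ∀ x ∈ J, x^2 / a ∈ Set.Ioo (0:ℝ) (Real.exp (-1)))
    (h : ℝ → ℝ) (hhC2 : ContDiffOn ℝ 2 h J)
    (hh'' : ∀ x ∈ J, deriv (deriv h) x = -1 / finv (x^2 / a))
    (I : Set ℝ) (hIopen : IsOpen I) (hIconn : I.OrdConnected)
    (lam : ℝ → ℝ) (hlam : ContDiffOn ℝ 2 lam I) (hpos : ∀ t ∈ I, 0 < lam t)
    (hJd : ∀ t ∈ I, deriv lam t ∈ J)
    (hode : ∀ t ∈ I,
      lam t * deriv (deriv lam) t = a * finv ((deriv lam t)^2 / a)) :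
    ∃ C : ℝ, ∀ t ∈ I,
      -deriv lam t * deriv h (deriv lam t) + h (deriv lam t)
        - a * Real.log (lam t) = C := by
  set E : ℝ → ℝ := fun t =>
    -deriv lam t * deriv h (deriv lam t) + h (deriv lam t)
      - a * Real.log (lam t) with hE
  -- E has derivative 0 at every point of I
  have key : ∀ t ∈ I, HasDerivAt E 0 t := by
    intro t ht
    set x := deriv lam t with hx
    have hxJ : x ∈ J := hJd t ht
    have hzIoo : x^2 / a ∈ Set.Ioo (0:ℝ) (Real.exp (-1)) := hJ x hxJ
    have hfinvpos : 0 < finv (x^2 / a) := (hinv _ hzIoo).1.1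
    have hlampos := hpos t ht
    -- differentiability facts
    have hlam1 : DifferentiableOn ℝ lam I :=
      hlam.differentiableOn (by norm_num)
    have hlamd : ContDiffOn ℝ 1 (deriv lam) I :=
      hlam.deriv_of_isOpen hIopen (by norm_num)
    have hd1 : HasDerivAt lam x t :=
      ((hlam1 t ht).differentiableAt (hIopen.mem_nhds ht)).hasDerivAt
    have hd2 : HasDerivAt (deriv lam) (deriv (deriv lam) t) t :=
      ((hlamd.differentiableOn (by norm_num) t ht).differentiableAt
        (hIopen.mem_nhds ht)).hasDerivAt
    have hh1 : DifferentiableOn ℝ h J := hhC2.differentiableOn (by norm_num)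
    have hhd : ContDiffOn ℝ 1 (deriv h) J :=
      hhC2.deriv_of_isOpen hJopen (by norm_num)
    have hdh : HasDerivAt h (deriv h x) x :=
      ((hh1 x hxJ).differentiableAt (hJopen.mem_nhds hxJ)).hasDerivAt
    have hdh2 : HasDerivAt (deriv h) (deriv (deriv h) x) x :=
      ((hhd.differentiableOn (by norm_num) x hxJ).differentiableAt
        (hJopen.mem_nhds hxJ)).hasDerivAt
    -- second derivative of lam from the ODE
    have hode' : deriv (deriv lam) t = a * finv (x^2 / a) / lam t := by
      have := hode t ht
      field_simp at this ⊢
      linarith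
    -- value of h'' at x
    have hh2 : deriv (deriv h) x = -1 / finv (x^2 / a) := hh'' x hxJ
    -- assemble
    have hcomp1 : HasDerivAt (fun s => h (deriv lam s))
        (deriv h x * deriv (deriv lam) t) t := hdh.comp t hd2
    have hcomp2 : HasDerivAt (fun s => deriv h (deriv lam s))
        (deriv (deriv h) x * deriv (deriv lam) t) t := by have := hdh2.comp t hd2; exact this
    have hlog : HasDerivAt (fun s => Real.log (lam s)) (x / lam t) t := by
      simpa [Real.deriv_log, div_eq_mul_inv, mul_comm, Function.comp_def] using
        (Real.hasDerivAt_log (ne_of_gt hlampos)).comp t hd1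
    have hprod : HasDerivAt (fun s => -deriv lam s * deriv h (deriv lam s))
        (-(deriv (deriv lam) t) * deriv h x
          + -x * (deriv (deriv h) x * deriv (deriv lam) t)) t := by
      exact (hd2.neg.mul hcomp2)
    have htotal : HasDerivAt E
        ((-(deriv (deriv lam) t) * deriv h x
          + -x * (deriv (deriv h) x * deriv (deriv lam) t))
         + deriv h x * deriv (deriv lam) t
         - a * (x / lam t)) t := by
      exact ((hprod.add hcomp1).sub (hlog.const_mul a))
    have hzero : (-(deriv (deriv lam) t) * deriv h x
          + -x * (deriv (deriv h) x * deriv (deriv lam) t))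
         + deriv h x * deriv (deriv lam) t
         - a * (x / lam t) = 0 := by
      rw [hh2, hode']
      field_simp
      ring
    rwa [hzero] at htotal
  -- constancy on the convex set I
  rcases Set.eq_empty_or_nonempty I with hIe | ⟨t₀, ht₀⟩
  · exact ⟨0, fun t ht => absurd ht (by simp [hIe])⟩
  · refine ⟨E t₀, fun t ht => ?_⟩
    have hconv : Convex ℝ I := hIconn.convex
    refine hconv.is_const_of_fderivWithin_eq_zero
      (fun s hs => ((key s hs).differentiableAt).differentiableWithinAt)
      (fun s hs => ?_) ht ht₀
    rw [fderivWithin_of_isOpen hIopen hs]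
    rw [(key s hs).hasFDerivAt.fderiv]
    ext v
    simp
end
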